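/- arXiv:1607.01993 — 4 statements merged into one kernel-verified Lean document; each statement's English description precedes it below -/
import Mathlib

section
/- Let A be a quantifier-free symbolic heap and let γ(A) denote its Presburger satisfiability encoding. Then for every stack s: s ⊨ γ(A) if and only if there exists a heap h with s,h ⊨ A. -/
/-! ## Array separation logic (ASL): syntax and stack-heap semantics -/

/-- Terms of array separation logic: variables (named by naturals), constants,
addition, and multiplication by a constant. -/
inductive Trm : Type where
  | var : ℕ → Trm
  | const : ℕ → Trm
  | add : Trm → Trm → Trm
  | smul : ℕ → Trm → Trm

/-- A stack maps variables to naturals. -/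
abbrev Stack := ℕ → ℕ

/-- Evaluation of terms under a stack. -/
def Trm.eval (s : Stack) : Trm → ℕ
  | .var x => s x
  | .const n => n
  | .add t u => t.eval s + u.eval s
  | .smul n t => n * t.eval s

/-- Variables occurring in a term. -/
def Trm.vars : Trm → Set ℕ
  | .var x => {x}
  | .const _ => ∅
  | .add t u => t.vars ∪ u.vars
  | .smul _ t => t.vars

/-- Pure formulas: conjunctions of atomic arithmetic constraints. -/
inductive PureF : Type where
  | tru : PureF
  | eq : Trm → Trm → PureF
  | ne : Trm → Trm → PureF
  | le : Trm → Trm → PureF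
  | lt : Trm → Trm → PureF
  | and : PureF → PureF → PureF

/-- Satisfaction of pure formulas (depends only on the stack). -/
def PureF.sat (s : Stack) : PureF → Prop
  | .tru => True
  | .eq t u => t.eval s = u.eval s
  | .ne t u => t.eval s ≠ u.eval s
  | .le t u => t.eval s ≤ u.eval s
  | .lt t u => t.eval s < u.eval s
  | .and p q => p.sat s ∧ q.sat s

def PureF.vars : PureF → Set ℕ
  | .tru => ∅
  | .eq t u => t.vars ∪ u.vars
  | .ne t u => t.vars ∪ u.vars
  | .le t u => t.vars ∪ u.vars
  | .lt t u => t.vars ∪ u.vars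
  | .and p q => p.vars ∪ q.vars

/-- The (top-level) terms occurring in a pure formula. -/
def PureF.trms : PureF → List Trm
  | .tru => []
  | .eq t u => [t, u]
  | .ne t u => [t, u]
  | .le t u => [t, u]
  | .lt t u => [t, u]
  | .and p q => p.trms ++ q.trms

/-- The conjuncts of a pure formula. -/
def PureF.conjuncts : PureF → List PureF
  | .and p q => p.conjuncts ++ q.conjuncts
  | p => [p]

/-- Finite conjunction. -/
def bigAnd : List PureF → PureF
  | [] => .tru
  | p :: ps => .and p (bigAnd ps)

/-- Spatial formulas: `emp`, points-to, arrays, and separating conjunction. -/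
inductive Spatial : Type where
  | emp : Spatial
  | pto : Trm → Trm → Spatial
  | arr : Trm → Trm → Spatial
  | star : Spatial → Spatial → Spatial

/-- Heaps: finite partial functions from ℕ (locations) to ℕ (values). -/
abbrev Heap := Finmap (fun _ : ℕ => ℕ)

/-- Satisfaction of spatial formulas. -/
def Spatial.sat (s : Stack) : Spatial → Heap → Prop
  | .emp, h => h = ∅
  | .pto t u, h =>
      h.keys = {Trm.eval s t} ∧ Finmap.lookup (Trm.eval s t) h = some (Trm.eval s u)
  | .arr t u, h =>
      Trm.eval s t ≤ Trm.eval s u ∧ h.keys = Finset.Icc (Trm.eval s t) (Trm.eval s u)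
  | .star F G, h =>
      ∃ h₁ h₂ : Heap, h₁.Disjoint h₂ ∧ h = h₁ ∪ h₂ ∧ F.sat s h₁ ∧ G.sat s h₂

def Spatial.vars : Spatial → Set ℕ
  | .emp => ∅
  | .pto t u => t.vars ∪ u.vars
  | .arr t u => t.vars ∪ u.vars
  | .star F G => F.vars ∪ G.vars

/-- The (top-level) terms occurring in a spatial formula. -/
def Spatial.trms : Spatial → List Trm
  | .emp => []
  | .pto t u => [t, u]
  | .arr t u => [t, u]
  | .star F G => F.trms ++ G.trms

/-- The points-to atoms of a spatial formula, as (address, value) pairs. -/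
def Spatial.ptos : Spatial → List (Trm × Trm)
  | .emp => []
  | .pto t u => [(t, u)]
  | .arr _ _ => []
  | .star F G => F.ptos ++ G.ptos

/-- The array atoms of a spatial formula, as endpoint pairs. -/
def Spatial.arrs : Spatial → List (Trm × Trm)
  | .emp => []
  | .pto _ _ => []
  | .arr t u => [(t, u)]
  | .star F G => F.arrs ++ G.arrs

/-- The arrays of the array abstraction `⟨A⟩`: each points-to `c ↦ d` is
replaced by the single-cell array `array(c,c)`. -/
def Spatial.absArrays : Spatial → List (Trm × Trm)
  | .emp => []
  | .pto t _ => [(t, t)]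
  | .arr t u => [(t, u)]
  | .star F G => F.absArrays ++ G.absArrays

/-- Finite separating conjunction. -/
def bigStar : List Spatial → Spatial
  | [] => .emp
  | F :: Fs => .star F (bigStar Fs)

/-- Quantifier-free symbolic heaps `Π : F`. -/
structure SymHeap : Type where
  pure : PureF
  spatial : Spatial

/-- Satisfaction of quantifier-free symbolic heaps. -/
def SymHeap.sat (s : Stack) (h : Heap) (A : SymHeap) : Prop :=
  A.pure.sat s ∧ A.spatial.sat s h

def SymHeap.vars (A : SymHeap) : Set ℕ := A.pure.vars ∪ A.spatial.vars

/-- All (top-level) terms occurring in a symbolic heap. -/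
def SymHeap.trms (A : SymHeap) : List Trm := A.pure.trms ++ A.spatial.trms

/-- Lifting `*` to symbolic heaps: conjoin pure parts, `*`-conjoin spatial parts. -/
def SymHeap.star (A X : SymHeap) : SymHeap :=
  ⟨.and A.pure X.pure, .star A.spatial X.spatial⟩

/-- Satisfiability of a symbolic heap. -/
def SymHeap.Satisfiable (A : SymHeap) : Prop := ∃ (s : Stack) (h : Heap), A.sat s h

/-- Semantic entailment between quantifier-free symbolic heaps. -/
def Entails (A B : SymHeap) : Prop := ∀ (s : Stack) (h : Heap), A.sat s h → B.sat s h

/-- Existentially quantified symbolic heaps `∃ z⃗. Π : F`. -/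
structure QSymHeap : Type where
  bound : List ℕ
  body : SymHeap

/-- Satisfaction of quantified symbolic heaps: some extension of the stack on the
bound variables satisfies the body. -/
def QSymHeap.sat (s : Stack) (h : Heap) (B : QSymHeap) : Prop :=
  ∃ s' : Stack, (∀ x : ℕ, x ∉ B.bound → s' x = s x) ∧ B.body.sat s' h

/-! ## The arithmetic encodings γ, β, φ, ψ₁, ψ₂, χ (interpreted over stacks) -/

/-- `s ⊨ γ(A)`: the Presburger satisfiability encoding of `A`, i.e. the pure part
of `A` together with well-definedness and pairwise disjointness of the arrays of
the array abstraction `⟨A⟩`. -/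
def gammaSat (A : SymHeap) (s : Stack) : Prop :=
  A.pure.sat s ∧
  (∀ p ∈ A.spatial.absArrays, Trm.eval s p.1 ≤ Trm.eval s p.2) ∧
  A.spatial.absArrays.Pairwise (fun p q =>
    Trm.eval s p.2 < Trm.eval s q.1 ∨ Trm.eval s q.2 < Trm.eval s p.1)

/-- `s ⊨ β(A,B)`. -/
def betaSat (A B : SymHeap) (s : Stack) : Prop :=
  gammaSat A s ∧ gammaSat B s ∧
  (∀ p ∈ B.spatial.ptos, ∀ q ∈ A.spatial.arrs,
      Trm.eval s p.1 < Trm.eval s q.1 ∨ Trm.eval s p.1 > Trm.eval s q.2) ∧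
  (∀ p ∈ A.spatial.ptos, ∀ q ∈ B.spatial.ptos,
      Trm.eval s p.1 ≠ Trm.eval s q.1 ∨ Trm.eval s p.2 = Trm.eval s q.2)

/-- The term set `Terms(A,B)`: all terms occurring in `A` and `B`, together with
the successor terms `b_i + 1`, `d_i + 1` (array right endpoints) and
`t_i + 1`, `v_i + 1` (points-to addresses). -/
def termSet (A B : SymHeap) : List Trm :=
  A.trms ++ B.trms ++
  (A.spatial.arrs.map fun p => Trm.add p.2 (Trm.const 1)) ++
  (B.spatial.arrs.map fun p => Trm.add p.2 (Trm.const 1)) ++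
  (A.spatial.ptos.map fun p => Trm.add p.1 (Trm.const 1)) ++
  (B.spatial.ptos.map fun p => Trm.add p.1 (Trm.const 1))

/-- A solution seed for the biabduction instance `(A,B)`. -/
def IsSolutionSeed (A B : SymHeap) (Δ : PureF) : Prop :=
  (∃ s : Stack, Δ.sat s) ∧
  (∀ s : Stack, Δ.sat s → betaSat A B s) ∧
  (∀ δ ∈ Δ.conjuncts, ∃ t ∈ termSet A B, ∃ u ∈ termSet A B,
      δ = PureF.lt t u ∨ δ = PureF.eq t u) ∧
  (∀ t ∈ termSet A B, ∀ u ∈ termSet A B, ∃ δ ∈ Δ.conjuncts,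
      δ = PureF.lt t u ∨ δ = PureF.lt u t ∨ δ = PureF.eq t u)

/-- The (quantifier-free) biabduction problem `(A,B)` has a solution. -/
def HasBiabductionSolution (A B : SymHeap) : Prop :=
  ∃ X Y : SymHeap, (A.star X).Satisfiable ∧ Entails (A.star X) (B.star Y)

/-- `s ⊨ φ(A,B)` (over the array abstractions of `A` and `B`). -/
def phiSat (A B : SymHeap) (s : Stack) : Prop :=
  ∃ x : ℕ,
    (∃ p ∈ A.spatial.absArrays, Trm.eval s p.1 ≤ x ∧ x ≤ Trm.eval s p.2) ∧
    ∀ q ∈ B.spatial.absArrays, x < Trm.eval s q.1 ∨ x > Trm.eval s q.2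

/-- `s ⊨ ψ₁(A,B)`: some points-to address of `B` is covered by an array of `A`. -/
def psi1Sat (A B : SymHeap) (s : Stack) : Prop :=
  ∃ p ∈ A.spatial.arrs, ∃ q ∈ B.spatial.ptos,
    Trm.eval s p.1 ≤ Trm.eval s q.1 ∧ Trm.eval s q.1 ≤ Trm.eval s p.2

/-- `s ⊨ ψ₂(A,B)`: some pointers of `A` and `B` share an address but disagree on
their contents. -/
def psi2Sat (A B : SymHeap) (s : Stack) : Prop :=
  ∃ p ∈ A.spatial.ptos, ∃ q ∈ B.spatial.ptos,
    Trm.eval s p.1 = Trm.eval s q.1 ∧ Trm.eval s p.2 ≠ Trm.eval s q.2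

/-- `s ⊨ χ(A, ∃z⃗.Q)`. -/
def chiSat (A : SymHeap) (zs : List ℕ) (Q : SymHeap) (s : Stack) : Prop :=
  gammaSat A s ∧
  ∀ s' : Stack, (∀ x : ℕ, x ∉ zs → s' x = s x) →
    (¬ gammaSat Q s' ∨ phiSat A Q s' ∨ phiSat Q A s' ∨
      psi1Sat A Q s' ∨ psi2Sat A Q s')

/-! ### Auxiliary lemmas for stmt_2 -/

/-- The key set prescribed by the array abstraction. -/
def keyset (s : Stack) (F : Spatial) : Finset ℕ :=
  (F.absArrays.map fun p => Finset.Icc (p.1.eval s) (p.2.eval s)).foldr (· ∪ ·) ∅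

lemma mem_foldr_union (l : List (Finset ℕ)) (x : ℕ) :
    x ∈ l.foldr (· ∪ ·) ∅ ↔ ∃ t ∈ l, x ∈ t := by
  induction l with
  | nil => simp
  | cons a l ih => simp [ih]

lemma mem_keyset {s : Stack} {F : Spatial} {x : ℕ} :
    x ∈ keyset s F ↔ ∃ p ∈ F.absArrays, p.1.eval s ≤ x ∧ x ≤ p.2.eval s := by
  rw [keyset, mem_foldr_union]
  constructor
  · rintro ⟨t, ht, hx⟩
    rw [List.mem_map] at ht
    obtain ⟨p, hp, rfl⟩ := ht
    exact ⟨p, hp, by simpa using hx⟩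
  · rintro ⟨p, hp, hx⟩
    exact ⟨_, List.mem_map_of_mem hp, by simpa using hx⟩

lemma keyset_star (s : Stack) (F G : Spatial) :
    keyset s (.star F G) = keyset s F ∪ keyset s G := by
  ext x; simp [mem_keyset, Spatial.absArrays, or_and_right, exists_or]

lemma icc_cases {a b c d : ℕ} (hab : a ≤ b) (hcd : c ≤ d)
    (h : ∀ x, a ≤ x → x ≤ b → ¬ (c ≤ x ∧ x ≤ d)) : b < c ∨ d < a := by
  by_contra hc
  push_neg at hc
  exact h (max a c) (le_max_left _ _) (max_le hab hc.1)
    ⟨le_max_right _ _, max_le hc.2 hcd⟩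

/-- Soundness: a satisfying heap has the prescribed key set and forces γ's
spatial constraints. -/
lemma sat_keys {s : Stack} : ∀ {F : Spatial} {h : Heap}, F.sat s h →
    (∀ p ∈ F.absArrays, p.1.eval s ≤ p.2.eval s) ∧
    F.absArrays.Pairwise (fun p q =>
      p.2.eval s < q.1.eval s ∨ q.2.eval s < p.1.eval s) ∧
    h.keys = keyset s F := by
  intro F
  induction F with
  | emp =>
    intro h hs
    rcases hs with rfl
    simp [Spatial.absArrays, keyset]
  | pto t u =>
    intro h hs
    refine ⟨by simp [Spatial.absArrays], by simp [Spatial.absArrays], ?_⟩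
    rw [hs.1]
    ext x; simp [mem_keyset, Spatial.absArrays, le_antisymm_iff, and_comm]
  | arr t u =>
    intro h hs
    refine ⟨by simp [Spatial.absArrays, hs.1], by simp [Spatial.absArrays], ?_⟩
    rw [hs.2]
    ext x; simp [mem_keyset, Spatial.absArrays]
  | star F G ihF ihG =>
    intro h hs
    rcases hs with ⟨h₁, h₂, hdisj, rfl, hF, hG⟩
    obtain ⟨hF1, hF2, hF3⟩ := ihF hF
    obtain ⟨hG1, hG2, hG3⟩ := ihG hG
    have hcross : ∀ p ∈ F.absArrays, ∀ q ∈ G.absArrays,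
        p.2.eval s < q.1.eval s ∨ q.2.eval s < p.1.eval s := by
      intro p hp q hq
      refine icc_cases (hF1 p hp) (hG1 q hq) ?_
      intro x hx1 hx2 hx3
      have hx₁ : x ∈ h₁ := by
        rw [← Finmap.mem_keys, hF3, mem_keyset]; exact ⟨p, hp, hx1, hx2⟩
      have hx₂ : x ∈ h₂ := by
        rw [← Finmap.mem_keys, hG3, mem_keyset]; exact ⟨q, hq, hx3.1, hx3.2⟩
      exact hdisj x hx₁ hx₂
    refine ⟨?_, ?_, ?_⟩
    · intro p hp
      rw [Spatial.absArrays, List.mem_append] at hp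
      rcases hp with hp | hp
      · exact hF1 p hp
      · exact hG1 p hp
    · rw [Spatial.absArrays, List.pairwise_append]
      exact ⟨hF2, hG2, hcross⟩
    · rw [Finmap.keys_union, hF3, hG3, keyset_star]

/-- A heap of zeros with key set `Finset.Icc a b`. -/
def rangeHeap (a b : ℕ) : Heap :=
  ⟨(Finset.Icc a b).val.map fun k => ⟨k, 0⟩, by
    rw [← Multiset.nodup_keys]
    have : Multiset.keys ((Finset.Icc a b).val.map fun k => (⟨k, 0⟩ : Σ _ : ℕ, ℕ))
        = (Finset.Icc a b).val := by
      simp [Multiset.keys, Multiset.map_map, Function.comp_def]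
    rw [this]
    exact (Finset.Icc a b).nodup⟩

lemma keys_rangeHeap (a b : ℕ) : (rangeHeap a b).keys = Finset.Icc a b := by
  have h1 : (rangeHeap a b).entries.keys = (Finset.Icc a b).val := by
    simp [rangeHeap, Multiset.keys, Multiset.map_map, Function.comp_def]
  ext x
  rw [Finmap.mem_keys, Finmap.mem_def, h1]
  simp

/-- Completeness: γ's spatial constraints yield a satisfying heap with the
prescribed key set. -/
lemma exists_sat_heap {s : Stack} : ∀ {F : Spatial},
    (∀ p ∈ F.absArrays, p.1.eval s ≤ p.2.eval s) →
    F.absArrays.Pairwise (fun p q =>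
      p.2.eval s < q.1.eval s ∨ q.2.eval s < p.1.eval s) →
    ∃ h : Heap, F.sat s h ∧ h.keys = keyset s F := by
  intro F
  induction F with
  | emp =>
    intro _ _
    exact ⟨∅, rfl, by simp [keyset, Spatial.absArrays]⟩
  | pto t u =>
    intro _ _
    refine ⟨Finmap.singleton (t.eval s) (u.eval s), ⟨?_, ?_⟩, ?_⟩
    · exact Finmap.keys_singleton _ _
    · exact Finmap.lookup_singleton_eq
    · rw [Finmap.keys_singleton]
      ext x; simp [mem_keyset, Spatial.absArrays, le_antisymm_iff, and_comm]
  | arr t u =>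
    intro h1 _
    have hle : t.eval s ≤ u.eval s := h1 (t, u) (by simp [Spatial.absArrays])
    refine ⟨rangeHeap (t.eval s) (u.eval s), ⟨hle, keys_rangeHeap _ _⟩, ?_⟩
    rw [keys_rangeHeap]
    ext x; simp [mem_keyset, Spatial.absArrays]
  | star F G ihF ihG =>
    intro h1 h2
    rw [Spatial.absArrays] at h1
    rw [Spatial.absArrays, List.pairwise_append] at h2
    obtain ⟨hA, hFsat, hkF⟩ := ihF (fun p hp => h1 p (by simp [hp])) h2.1
    obtain ⟨hB, hGsat, hkG⟩ := ihG (fun p hp => h1 p (by simp [hp])) h2.2.1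
    have hdisj : Finmap.Disjoint hA hB := by
      intro x hx hy
      rw [← Finmap.mem_keys, hkF, mem_keyset] at hx
      rw [← Finmap.mem_keys, hkG, mem_keyset] at hy
      obtain ⟨p, hp, hpx⟩ := hx
      obtain ⟨q, hq, hqx⟩ := hy
      rcases h2.2.2 p hp q hq with h | h <;> omega
    refine ⟨hA ∪ hB, ⟨hA, hB, hdisj, rfl, hFsat, hGsat⟩, ?_⟩
    rw [Finmap.keys_union, hkF, hkG, keyset_star]

/-- Lemma (γ): for any quantifier-free symbolic heap `A` and stack `s`,
`s ⊨ γ(A)` iff there is a heap `h` with `s,h ⊨ A`. -/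
theorem stmt_2 (A : SymHeap) (s : Stack) :
    gammaSat A s ↔ ∃ h : Heap, A.sat s h := by
  constructor
  · rintro ⟨hp, h1, h2⟩
    obtain ⟨h, hs, -⟩ := exists_sat_heap h1 h2
    exact ⟨h, hp, hs⟩
  · rintro ⟨h, hp, hs⟩
    obtain ⟨h1, h2, -⟩ := sat_keys hs
    exact ⟨hp, h1, h2⟩
end

section
/- A quantifier-free symbolic heap A of array separation logic is satisfiable (i.e., there exist a stack s and heap h with s,h ⊨ A) if and only if the arithmetic formula γ(A) is satisfiable over ℕ (i.e., there exists a stack s with s ⊨ γ(A)). -/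
/-! ## Auxiliary lemmas for stmt_3 -/

lemma heap_keys_insert (a : ℕ) (b : ℕ) (h : Heap) :
    (h.insert a b).keys = insert a h.keys := by
  ext k
  simp [Finmap.mem_keys, Finmap.mem_insert]

/-- Any finite set of naturals is the key set of some heap. -/
lemma exists_heap_keys (t : Finset ℕ) : ∃ h : Heap, h.keys = t := by
  induction t using Finset.induction_on with
  | empty => exact ⟨∅, Finmap.keys_empty⟩
  | @insert a t ha ih =>
      obtain ⟨h, hk⟩ := ih
      exact ⟨h.insert a 0, by rw [heap_keys_insert, hk]⟩

/-- Forward direction: a satisfied spatial formula yields the γ conditions and a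
membership characterization of the heap. -/
lemma spatial_sat_fwd (s : Stack) :
    ∀ (F : Spatial) (h : Heap), F.sat s h →
      (∀ p ∈ F.absArrays, Trm.eval s p.1 ≤ Trm.eval s p.2) ∧
      (∀ k : ℕ, k ∈ h ↔ ∃ p ∈ F.absArrays,
          Trm.eval s p.1 ≤ k ∧ k ≤ Trm.eval s p.2) ∧
      F.absArrays.Pairwise (fun p q =>
        Trm.eval s p.2 < Trm.eval s q.1 ∨ Trm.eval s q.2 < Trm.eval s p.1) := by
  intro F
  induction F with
  | emp =>
      intro h hs
      cases hs
      refine ⟨by simp [Spatial.absArrays], ?_, by simp [Spatial.absArrays]⟩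
      intro k
      simp [Spatial.absArrays, Finmap.notMem_empty]
  | pto t u =>
      intro h hs
      obtain ⟨hkeys, _⟩ := hs
      refine ⟨by simp [Spatial.absArrays], ?_, by simp [Spatial.absArrays]⟩
      intro k
      rw [← Finmap.mem_keys, hkeys]
      simp only [Finset.mem_singleton, Spatial.absArrays, List.mem_singleton]
      constructor
      · rintro rfl; exact ⟨(t, t), rfl, le_refl _, le_refl _⟩
      · rintro ⟨p, rfl, h1, h2⟩; exact le_antisymm h2 h1
  | arr t u =>
      intro h hs
      obtain ⟨hle, hkeys⟩ := hs
      refine ⟨by simpa [Spatial.absArrays] using hle, ?_, by simp [Spatial.absArrays]⟩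
      intro k
      rw [← Finmap.mem_keys, hkeys]
      simp only [Finset.mem_Icc, Spatial.absArrays, List.mem_singleton]
      constructor
      · rintro ⟨h1, h2⟩; exact ⟨(t, u), rfl, h1, h2⟩
      · rintro ⟨p, rfl, h1, h2⟩; exact ⟨h1, h2⟩
  | star F G ihF ihG =>
      intro h hs
      obtain ⟨h₁, h₂, hdisj, rfl, hF, hG⟩ := hs
      obtain ⟨hF1, hF2, hF3⟩ := ihF h₁ hF
      obtain ⟨hG1, hG2, hG3⟩ := ihG h₂ hG
      refine ⟨?_, ?_, ?_⟩
      · intro p hp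
        rcases List.mem_append.mp hp with hp | hp
        · exact hF1 p hp
        · exact hG1 p hp
      · intro k
        rw [Finmap.mem_union]
        simp only [Spatial.absArrays, List.mem_append]
        rw [hF2 k, hG2 k]
        constructor
        · rintro (⟨p, hp, h1, h2⟩ | ⟨p, hp, h1, h2⟩)
          · exact ⟨p, Or.inl hp, h1, h2⟩
          · exact ⟨p, Or.inr hp, h1, h2⟩
        · rintro ⟨p, hp | hp, h1, h2⟩
          · exact Or.inl ⟨p, hp, h1, h2⟩
          · exact Or.inr ⟨p, hp, h1, h2⟩
      · show (F.absArrays ++ G.absArrays).Pairwise _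
        rw [List.pairwise_append]
        refine ⟨hF3, hG3, ?_⟩
        intro p hp q hq
        by_contra hc
        push_neg at hc
        obtain ⟨h1, h2⟩ := hc
        set k := max (Trm.eval s p.1) (Trm.eval s q.1) with hk
        have hkp : k ∈ h₁ := (hF2 k).mpr ⟨p, hp, by omega, by
          have := hF1 p hp; have := hG1 q hq; omega⟩
        have hkq : k ∈ h₂ := (hG2 k).mpr ⟨q, hq, by omega, by
          have := hF1 p hp; have := hG1 q hq; omega⟩
        exact hdisj k hkp hkq

/-- Backward direction: from the γ conditions, a satisfying heap can be built. -/
lemma spatial_sat_bwd (s : Stack) :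
    ∀ F : Spatial,
      (∀ p ∈ F.absArrays, Trm.eval s p.1 ≤ Trm.eval s p.2) →
      F.absArrays.Pairwise (fun p q =>
        Trm.eval s p.2 < Trm.eval s q.1 ∨ Trm.eval s q.2 < Trm.eval s p.1) →
      ∃ h : Heap, F.sat s h ∧
        ∀ k : ℕ, k ∈ h ↔ ∃ p ∈ F.absArrays,
          Trm.eval s p.1 ≤ k ∧ k ≤ Trm.eval s p.2 := by
  intro F
  induction F with
  | emp =>
      intro _ _
      refine ⟨∅, rfl, ?_⟩
      intro k
      simp [Spatial.absArrays, Finmap.notMem_empty]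
  | pto t u =>
      intro _ _
      refine ⟨Finmap.singleton (Trm.eval s t) (Trm.eval s u),
        ⟨Finmap.keys_singleton _ _, Finmap.lookup_singleton_eq⟩, ?_⟩
      intro k
      rw [← Finmap.mem_keys, Finmap.keys_singleton]
      simp only [Finset.mem_singleton, Spatial.absArrays, List.mem_singleton]
      constructor
      · rintro rfl; exact ⟨(t, t), rfl, le_refl _, le_refl _⟩
      · rintro ⟨p, rfl, h1, h2⟩; exact le_antisymm h2 h1
  | arr t u =>
      intro hle _
      obtain ⟨h, hk⟩ := exists_heap_keys (Finset.Icc (Trm.eval s t) (Trm.eval s u))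
      have hle' : Trm.eval s t ≤ Trm.eval s u := hle (t, u) (by simp [Spatial.absArrays])
      refine ⟨h, ⟨hle', hk⟩, ?_⟩
      intro k
      rw [← Finmap.mem_keys, hk]
      simp only [Finset.mem_Icc, Spatial.absArrays, List.mem_singleton]
      constructor
      · rintro ⟨h1, h2⟩; exact ⟨(t, u), rfl, h1, h2⟩
      · rintro ⟨p, rfl, h1, h2⟩; exact ⟨h1, h2⟩
  | star F G ihF ihG =>
      intro hle hpw
      have hpw' : (F.absArrays ++ G.absArrays).Pairwise (fun p q =>
          Trm.eval s p.2 < Trm.eval s q.1 ∨ Trm.eval s q.2 < Trm.eval s p.1) := hpw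
      rw [List.pairwise_append] at hpw'
      obtain ⟨hpF, hpG, hcross⟩ := hpw'
      have hleF : ∀ p ∈ F.absArrays, Trm.eval s p.1 ≤ Trm.eval s p.2 :=
        fun p hp => hle p (List.mem_append.mpr (Or.inl hp))
      have hleG : ∀ p ∈ G.absArrays, Trm.eval s p.1 ≤ Trm.eval s p.2 :=
        fun p hp => hle p (List.mem_append.mpr (Or.inr hp))
      obtain ⟨h₁, hF, hmF⟩ := ihF hleF hpF
      obtain ⟨h₂, hG, hmG⟩ := ihG hleG hpG
      have hdisj : h₁.Disjoint h₂ := by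
        intro k hk1 hk2
        obtain ⟨p, hp, hp1, hp2⟩ := (hmF k).mp hk1
        obtain ⟨q, hq, hq1, hq2⟩ := (hmG k).mp hk2
        rcases hcross p hp q hq with h | h <;> omega
      refine ⟨h₁ ∪ h₂, ⟨h₁, h₂, hdisj, rfl, hF, hG⟩, ?_⟩
      intro k
      rw [Finmap.mem_union]
      simp only [Spatial.absArrays, List.mem_append]
      rw [hmF k, hmG k]
      constructor
      · rintro (⟨p, hp, h1, h2⟩ | ⟨p, hp, h1, h2⟩)
        · exact ⟨p, Or.inl hp, h1, h2⟩
        · exact ⟨p, Or.inr hp, h1, h2⟩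
      · rintro ⟨p, hp | hp, h1, h2⟩
        · exact Or.inl ⟨p, hp, h1, h2⟩
        · exact Or.inr ⟨p, hp, h1, h2⟩

/-- A quantifier-free symbolic heap `A` is satisfiable iff its Presburger
encoding `γ(A)` is satisfiable over ℕ. -/
theorem stmt_3 (A : SymHeap) :
    A.Satisfiable ↔ ∃ s : Stack, gammaSat A s := by
  constructor
  · rintro ⟨s, h, hpure, hsp⟩
    obtain ⟨h1, _, h3⟩ := spatial_sat_fwd s A.spatial h hsp
    exact ⟨s, hpure, h1, h3⟩
  · rintro ⟨s, hpure, h1, h3⟩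
    obtain ⟨h, hsp, _⟩ := spatial_sat_bwd s A.spatial h1 h3
    exact ⟨s, h, hpure, hsp⟩
end

section
/- Let (B, S) be an instance of the 3-partition problem: B ∈ ℕ and S = (k_1, …, k_{3m}) with Σ_{j=1}^{3m} k_j = mB and B/4 < k_j < B/2 for all j. Let A_{B,S} be the symbolic heap ⋀_{i=1}^{m} (d_{i+1} = d_i + B + 1) ∧ ⋀_{j=1}^{3m} (d_1 ≤ a_j ∧ a_j + k_j < d_{m+1}) : ⊛_{i=1}^{m+1} array(d_i, d_i) * ⊛_{j=1}^{3m} array(a_j + 1, a_j + k_j). Then A_{B,S} is satisfiable if and only if there exists a complete 3-partition of S with respect to B, i.e., a partition of the indices {1,…,3m} into m triples such that the three values k in each triple sum to exactly B. -/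
/-! ### The 3-partition reduction. Variables: `d_{i+1}` is `var i` for `i ∈ [0,m]`,
and `a_{j+1}` is `var (m+1+j)` for `j ∈ [0,3m)`. -/

/-- The symbolic heap `A_{B,S}`:
`⋀_{i=1}^{m} (d_{i+1} = dᵢ + B + 1) ∧ ⋀_{j=1}^{3m} (d₁ ≤ aⱼ ∧ aⱼ + kⱼ < d_{m+1})
 : ⊛_{i=1}^{m+1} array(dᵢ,dᵢ) * ⊛_{j=1}^{3m} array(aⱼ+1, aⱼ+kⱼ)`. -/
def heapABS (m B : ℕ) (k : Fin (3 * m) → ℕ) : SymHeap :=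
  ⟨PureF.and
      (bigAnd (List.ofFn fun i : Fin m =>
        PureF.eq (Trm.var (i.1 + 1)) (Trm.add (Trm.var i.1) (Trm.const (B + 1)))))
      (bigAnd (List.ofFn fun j : Fin (3 * m) =>
        PureF.and (PureF.le (Trm.var 0) (Trm.var (m + 1 + j.1)))
          (PureF.lt (Trm.add (Trm.var (m + 1 + j.1)) (Trm.const (k j))) (Trm.var m)))),
   Spatial.star
      (bigStar (List.ofFn fun i : Fin (m + 1) => Spatial.arr (Trm.var i.1) (Trm.var i.1)))
      (bigStar (List.ofFn fun j : Fin (3 * m) =>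
        Spatial.arr (Trm.add (Trm.var (m + 1 + j.1)) (Trm.const 1))
          (Trm.add (Trm.var (m + 1 + j.1)) (Trm.const (k j)))))⟩

/-- The symbolic heap `Ã_{B,S}`:
`⋀_{i=1}^{m} (d_{i+1} = dᵢ + B + 1) : ⊛_{i=1}^{m+1} array(dᵢ,dᵢ)`. -/
def heapAtil (m B : ℕ) : SymHeap :=
  ⟨bigAnd (List.ofFn fun i : Fin m =>
      PureF.eq (Trm.var (i.1 + 1)) (Trm.add (Trm.var i.1) (Trm.const (B + 1)))),
   bigStar (List.ofFn fun i : Fin (m + 1) => Spatial.arr (Trm.var i.1) (Trm.var i.1))⟩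

/-- The symbolic heap `B̃_{B,S}`:
`⋀_{i=1}^{m} (d_{i+1} > dᵢ) ∧ ⋀_{j=1}^{3m} (d₁ ≤ aⱼ ∧ aⱼ + kⱼ < d_{m+1})
 : ⊛_{i=1}^{m+1} array(dᵢ,dᵢ) * ⊛_{j=1}^{3m} array(aⱼ+1, aⱼ+kⱼ)`. -/
def heapBtil (m : ℕ) (k : Fin (3 * m) → ℕ) : SymHeap :=
  ⟨PureF.and
      (bigAnd (List.ofFn fun i : Fin m => PureF.lt (Trm.var i.1) (Trm.var (i.1 + 1))))
      (bigAnd (List.ofFn fun j : Fin (3 * m) =>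
        PureF.and (PureF.le (Trm.var 0) (Trm.var (m + 1 + j.1)))
          (PureF.lt (Trm.add (Trm.var (m + 1 + j.1)) (Trm.const (k j))) (Trm.var m)))),
   Spatial.star
      (bigStar (List.ofFn fun i : Fin (m + 1) => Spatial.arr (Trm.var i.1) (Trm.var i.1)))
      (bigStar (List.ofFn fun j : Fin (3 * m) =>
        Spatial.arr (Trm.add (Trm.var (m + 1 + j.1)) (Trm.const 1))
          (Trm.add (Trm.var (m + 1 + j.1)) (Trm.const (k j)))))⟩

/-- A complete 3-partition of `S = (k₁,…,k_{3m})` w.r.t. `B`: a partition of the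
indices into `m` groups of three, each of whose `k`-values sums to `B`. -/
def HasThreePartition (m B : ℕ) (k : Fin (3 * m) → ℕ) : Prop :=
  ∃ f : Fin (3 * m) → Fin m, ∀ i : Fin m,
    (Finset.univ.filter fun j => f j = i).card = 3 ∧
    ∑ j ∈ Finset.univ.filter (fun j => f j = i), k j = B

-- ### auxiliary

def heapOf (A : Finset ℕ) : Heap :=
  ⟨A.val.map (fun a => ⟨a, 0⟩), by
    rw [← Multiset.nodup_keys]
    have : (A.val.map (fun a => (⟨a, 0⟩ : Σ _ : ℕ, ℕ))).keys = A.val := by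
      simp [Multiset.keys]
    rw [this]; exact A.nodup⟩

lemma keys_heapOf (A : Finset ℕ) : (heapOf A).keys = A := by
  ext x; simp [heapOf, Finmap.keys, Multiset.keys]

lemma finmap_disjoint_of_keys {h1 h2 : Heap} (h : Disjoint h1.keys h2.keys) :
    h1.Disjoint h2 := by
  intro x hx hx2
  rw [← Finmap.mem_keys] at hx hx2
  exact Finset.disjoint_left.mp h hx hx2

lemma keys_disjoint_of_finmap {h1 h2 : Heap} (h : h1.Disjoint h2) :
    Disjoint h1.keys h2.keys := by
  rw [Finset.disjoint_left]
  intro x hx hx2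
  rw [Finmap.mem_keys] at hx hx2
  exact h x hx hx2

def iccU : List (ℕ × ℕ) → Finset ℕ
  | [] => ∅
  | p :: L => Finset.Icc p.1 p.2 ∪ iccU L

lemma mem_iccU {x : ℕ} : ∀ {L : List (ℕ × ℕ)}, x ∈ iccU L ↔ ∃ p ∈ L, x ∈ Finset.Icc p.1 p.2
  | [] => by simp [iccU]
  | p :: L => by simp [iccU, mem_iccU (L := L)]

def evalP (s : Stack) (p : Trm × Trm) : ℕ × ℕ := (Trm.eval s p.1, Trm.eval s p.2)

def DisjIcc (p q : ℕ × ℕ) : Prop := Disjoint (Finset.Icc p.1 p.2) (Finset.Icc q.1 q.2)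

lemma disjIcc_of_lt {p q : ℕ × ℕ} (h : p.2 < q.1) : DisjIcc p q := by
  rw [DisjIcc, Finset.disjoint_left]
  intro x hx hx2
  rw [Finset.mem_Icc] at hx hx2
  omega

lemma bigAnd_sat {s : Stack} : ∀ {L : List PureF}, (bigAnd L).sat s ↔ ∀ p ∈ L, p.sat s
  | [] => by simp [bigAnd, PureF.sat]
  | p :: L => by simp [bigAnd, PureF.sat, bigAnd_sat (L := L)]

lemma sat_arrlist {s : Stack} : ∀ {L : List (Trm × Trm)} {h : Heap},
    Spatial.sat s (bigStar (L.map fun p => Spatial.arr p.1 p.2)) h →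
    ((L.map (evalP s)).Pairwise DisjIcc ∧ h.keys = iccU (L.map (evalP s)))
  | [], h, hs => by
      simp only [List.map_nil, bigStar, Spatial.sat] at hs
      simp [hs, iccU]
  | p :: L, h, hs => by
      simp only [List.map_cons, bigStar, Spatial.sat] at hs
      obtain ⟨h1, h2, hd, rfl, hp, hrest⟩ := hs
      obtain ⟨hpw, hk2⟩ := sat_arrlist hrest
      obtain ⟨hle, hk1⟩ := hp
      have hkd := keys_disjoint_of_finmap hd
      constructor
      · refine List.Pairwise.cons ?_ hpw
        intro q hq
        have hsub : Finset.Icc q.1 q.2 ⊆ h2.keys := by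
          rw [hk2]
          intro x hx
          exact mem_iccU.mpr ⟨q, hq, hx⟩
        have h1k : Finset.Icc (evalP s p).1 (evalP s p).2 = h1.keys := hk1.symm
        rw [DisjIcc, h1k]
        exact Finset.disjoint_of_subset_right hsub hkd
      · rw [Finmap.keys_union, hk1, hk2]
        simp [iccU, evalP]

lemma exists_sat_arrlist {s : Stack} : ∀ {L : List (Trm × Trm)},
    (∀ p ∈ L, Trm.eval s p.1 ≤ Trm.eval s p.2) →
    ((L.map (evalP s)).Pairwise DisjIcc) →
    ∃ h : Heap, h.keys = iccU (L.map (evalP s)) ∧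
      Spatial.sat s (bigStar (L.map fun p => Spatial.arr p.1 p.2)) h
  | [], _, _ => ⟨∅, by simp [iccU], by simp [bigStar, Spatial.sat]⟩
  | p :: L, hle, hpw => by
      obtain ⟨hhead, htail⟩ := List.pairwise_cons.mp hpw
      obtain ⟨h2, hk2, hs2⟩ :=
        exists_sat_arrlist (fun q hq => hle q (List.mem_cons_of_mem _ hq)) htail
      have hdk : Disjoint (Finset.Icc (Trm.eval s p.1) (Trm.eval s p.2)) h2.keys := by
        rw [hk2, Finset.disjoint_left]
        intro x hx hx2
        obtain ⟨q, hq, hxq⟩ := mem_iccU.mp hx2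
        exact Finset.disjoint_left.mp (hhead q hq) hx hxq
      have hdisj : (heapOf (Finset.Icc (Trm.eval s p.1) (Trm.eval s p.2))).Disjoint h2 :=
        finmap_disjoint_of_keys (by rw [keys_heapOf]; exact hdk)
      refine ⟨heapOf (Finset.Icc (Trm.eval s p.1) (Trm.eval s p.2)) ∪ h2, ?_, ?_⟩
      · rw [Finmap.keys_union, keys_heapOf, hk2]
        simp [iccU, evalP]
      · exact ⟨_, _, hdisj, rfl, ⟨hle p List.mem_cons_self, keys_heapOf _⟩, hs2⟩


lemma forward_aux (m B : ℕ) (k : Fin (3 * m) → ℕ)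
    (hsum : ∑ j, k j = m * B)
    (hbound : ∀ j, B < 4 * k j ∧ 2 * k j < B)
    (hsat : (heapABS m B k).Satisfiable) : HasThreePartition m B k := by
  obtain ⟨s, h, hpure, hsp⟩ := hsat
  simp only [heapABS] at hpure hsp
  obtain ⟨hp1, hp2⟩ := hpure
  rw [bigAnd_sat] at hp1 hp2
  set a : Fin (3*m) → ℕ := fun j => s (m+1+j.1) with ha
  have hstep : ∀ i : Fin m, s (i.1 + 1) = s i.1 + (B + 1) := by
    intro i
    have := hp1 _ (List.mem_ofFn.mpr ⟨i, rfl⟩)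
    simpa [PureF.sat, Trm.eval] using this
  have hbnd : ∀ j : Fin (3*m), s 0 ≤ a j ∧ a j + k j < s m := by
    intro j
    have := hp2 _ (List.mem_ofFn.mpr ⟨j, rfl⟩)
    simpa [PureF.sat, Trm.eval, ha] using this
  set D := s 0 with hD
  have dval : ∀ i, i ≤ m → s i = D + i * (B+1) := by
    intro i
    induction i with
    | zero => intro _; simp [hD]
    | succ n ih =>
        intro hn
        have h1 := hstep ⟨n, by omega⟩
        simp only at h1
        rw [h1, ih (by omega)]
        ring
  have kpos : ∀ j, 1 ≤ k j := fun j => by have := hbound j; omega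
  simp only [Spatial.sat] at hsp
  obtain ⟨h1, h2, hdis, hun, hs1, hs2⟩ := hsp
  have e1 : (List.ofFn fun i : Fin (m+1) => Spatial.arr (Trm.var i.1) (Trm.var i.1))
      = (List.ofFn fun i : Fin (m+1) => ((Trm.var i.1, Trm.var i.1) : Trm × Trm)).map
          (fun p => Spatial.arr p.1 p.2) := by
    rw [List.map_ofFn]; rfl
  have e2 : (List.ofFn fun j : Fin (3*m) =>
        Spatial.arr (Trm.add (Trm.var (m+1+j.1)) (Trm.const 1))
          (Trm.add (Trm.var (m+1+j.1)) (Trm.const (k j))))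
      = (List.ofFn fun j : Fin (3*m) =>
          ((Trm.add (Trm.var (m+1+j.1)) (Trm.const 1),
            Trm.add (Trm.var (m+1+j.1)) (Trm.const (k j))) : Trm × Trm)).map
          (fun p => Spatial.arr p.1 p.2) := by
    rw [List.map_ofFn]; rfl
  rw [e1] at hs1; rw [e2] at hs2
  obtain ⟨pw1, hk1⟩ := sat_arrlist hs1
  obtain ⟨pw2, hk2⟩ := sat_arrlist hs2
  rw [List.map_ofFn] at pw1 hk1 pw2 hk2
  have hkdis := keys_disjoint_of_finmap hdis
  have mem1 : ∀ i : Fin (m+1), s i.1 ∈ h1.keys := by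
    intro i
    rw [hk1]
    exact mem_iccU.mpr ⟨(s i.1, s i.1), List.mem_ofFn.mpr ⟨i, rfl⟩, by simp⟩
  have mem2sub : ∀ j : Fin (3*m), Finset.Icc (a j + 1) (a j + k j) ⊆ h2.keys := by
    intro j x hx
    rw [hk2]
    exact mem_iccU.mpr ⟨(a j + 1, a j + k j), List.mem_ofFn.mpr ⟨j, rfl⟩, hx⟩
  have main : ∀ j : Fin (3*m), ∃ i : Fin m,
      D + i.1*(B+1) ≤ a j ∧ a j + k j ≤ D + i.1*(B+1) + B := by
    intro j
    obtain ⟨hja, hjb⟩ := hbnd j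
    rw [dval m le_rfl] at hjb
    obtain ⟨t, ht⟩ : ∃ t, D + t = a j := ⟨a j - D, by omega⟩
    have hdm := Nat.div_add_mod t (B+1)
    set Q := t / (B+1) with hQdef
    set R := t % (B+1) with hRdef
    have hRlt : R < B+1 := Nat.mod_lt _ (by omega)
    have hkj := kpos j
    have htm : t < m * (B+1) := by linarith
    have hQm : Q < m := by
      have hql : (B+1) * Q ≤ t := Nat.le.intro hdm
      have hcm : m * (B+1) = (B+1) * m := Nat.mul_comm _ _
      have : (B+1) * Q < (B+1) * m := by linarith
      exact lt_of_mul_lt_mul_left this (Nat.zero_le _)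
    have hcmQ : Q * (B+1) = (B+1) * Q := Nat.mul_comm _ _
    refine ⟨⟨Q, hQm⟩, ?_, ?_⟩
    · have : (B+1) * Q ≤ t := Nat.le.intro hdm
      simp only
      linarith
    · simp only
      by_contra hcon
      push_neg at hcon
      have hPa : a j + 1 ≤ D + Q*(B+1) + (B+1) := by linarith
      have hPb : D + Q*(B+1) + (B+1) ≤ a j + k j := by linarith
      have hsQ : s (Q+1) = D + Q*(B+1) + (B+1) := by
        rw [dval (Q+1) (by omega)]
        ring
      have hPmem1 : D + Q*(B+1) + (B+1) ∈ h1.keys := by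
        have := mem1 ⟨Q+1, by omega⟩
        rwa [hsQ] at this
      have hPmem2 : D + Q*(B+1) + (B+1) ∈ h2.keys :=
        mem2sub j (Finset.mem_Icc.mpr ⟨hPa, hPb⟩)
      exact absurd hPmem2 (Finset.disjoint_left.mp hkdis hPmem1)
  choose f hfl hfu using main
  have hfibsum : ∀ i : Fin m, ∑ j ∈ Finset.univ.filter (fun j => f j = i), k j ≤ B := by
    intro i
    set S := Finset.univ.filter (fun j => f j = i) with hS
    rw [List.pairwise_ofFn] at pw2
    have hdisjS : ∀ j1 ∈ S, ∀ j2 ∈ S, j1 ≠ j2 →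
        Disjoint (Finset.Icc (a j1 + 1) (a j1 + k j1)) (Finset.Icc (a j2 + 1) (a j2 + k j2)) := by
      intro j1 _ j2 _ hne
      rcases lt_or_gt_of_ne hne with hlt | hgt
      · exact pw2 hlt
      · exact (pw2 hgt).symm
    have hcard := Finset.card_biUnion hdisjS
    have hsub2 : (S.biUnion fun j => Finset.Icc (a j + 1) (a j + k j)) ⊆
        Finset.Icc (D + i.1*(B+1) + 1) (D + i.1*(B+1) + B) := by
      intro x hx
      rw [Finset.mem_biUnion] at hx
      obtain ⟨j, hjS, hxj⟩ := hx
      rw [hS, Finset.mem_filter] at hjS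
      rw [Finset.mem_Icc] at hxj ⊢
      have hl := hfl j
      have hu := hfu j
      rw [hjS.2] at hl hu
      exact ⟨by linarith [hxj.1], by linarith [hxj.2]⟩
    have hle2 := Finset.card_le_card hsub2
    rw [hcard] at hle2
    have hcards : ∀ j ∈ S, (Finset.Icc (a j + 1) (a j + k j)).card = k j := by
      intro j _
      rw [Nat.card_Icc]
      omega
    rw [Finset.sum_congr rfl hcards] at hle2
    have hcardG : (Finset.Icc (D + i.1*(B+1) + 1) (D + i.1*(B+1) + B)).card = B := by
      rw [Nat.card_Icc]
      generalize D + i.1*(B+1) = X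
      omega
    rw [hcardG] at hle2
    exact hle2
  have heach : ∀ i : Fin m, ∑ j ∈ Finset.univ.filter (fun j => f j = i), k j = B := by
    by_contra hc
    push_neg at hc
    obtain ⟨i0, hi0⟩ := hc
    have hlt0 : ∑ j ∈ Finset.univ.filter (fun j => f j = i0), k j < B :=
      lt_of_le_of_ne (hfibsum i0) hi0
    have hltall : ∑ i : Fin m, (∑ j ∈ Finset.univ.filter (fun j => f j = i), k j)
        < ∑ _i : Fin m, B :=
      Finset.sum_lt_sum (fun i _ => hfibsum i) ⟨i0, Finset.mem_univ _, hlt0⟩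
    rw [Finset.sum_fiberwise, hsum, Finset.sum_const, Finset.card_univ,
      Fintype.card_fin, smul_eq_mul] at hltall
    exact lt_irrefl _ hltall
  refine ⟨f, fun i => ⟨?_, heach i⟩⟩
  set S := Finset.univ.filter (fun j => f j = i) with hS
  have hBpos : 0 < B := by
    have := hbound ⟨0, by have := i.2; omega⟩
    omega
  have hne : S.Nonempty := by
    rw [Finset.nonempty_iff_ne_empty]
    intro hS0
    have := heach i
    rw [← hS, hS0, Finset.sum_empty] at this
    omega
  have h4 : ∑ j ∈ S, 4 * k j = 4 * B := by rw [← Finset.mul_sum, hS, heach i]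
  have h2' : ∑ j ∈ S, 2 * k j = 2 * B := by rw [← Finset.mul_sum, hS, heach i]
  have hlt4 : S.card * B < 4 * B := by
    calc S.card * B = ∑ _j ∈ S, B := by rw [Finset.sum_const, smul_eq_mul]
    _ < ∑ j ∈ S, 4 * k j := Finset.sum_lt_sum_of_nonempty hne (fun j _ => (hbound j).1)
    _ = 4 * B := h4
  have hgt2 : 2 * B < S.card * B := by
    calc 2 * B = ∑ j ∈ S, 2 * k j := h2'.symm
    _ < ∑ _j ∈ S, B := Finset.sum_lt_sum_of_nonempty hne (fun j _ => (hbound j).2)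
    _ = S.card * B := by rw [Finset.sum_const, smul_eq_mul]
  have hc4 : S.card < 4 := lt_of_mul_lt_mul_right hlt4 (Nat.zero_le _)
  have hc2 : 2 < S.card := lt_of_mul_lt_mul_right hgt2 (Nat.zero_le _)
  omega

lemma backward_aux (m B : ℕ) (k : Fin (3 * m) → ℕ)
    (hbound : ∀ j, B < 4 * k j ∧ 2 * k j < B)
    (hpart : HasThreePartition m B k) : (heapABS m B k).Satisfiable := by
  obtain ⟨f, hf⟩ := hpart
  have kpos : ∀ j, 1 ≤ k j := fun j => by have := hbound j; omega
  have hfib : ∀ g : Fin m, ∑ j ∈ Finset.univ.filter (fun j => f j = g), k j = B :=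
    fun g => (hf g).2
  set pre : Fin (3*m) → ℕ :=
    fun j => ∑ j' ∈ Finset.univ.filter (fun j' => f j' = f j ∧ j' < j), k j' with hpre
  set aV : Fin (3*m) → ℕ := fun j => (f j).1 * (B+1) + pre j with haV
  have haVval : ∀ j, aV j = (f j).1 * (B+1) + pre j := fun j => rfl
  have hpreval : ∀ j, pre j = ∑ j' ∈ Finset.univ.filter (fun j' => f j' = f j ∧ j' < j), k j' :=
    fun j => rfl
  set s : Stack := fun x =>
    if x ≤ m then x * (B+1)
    else if hx : x - (m+1) < 3*m then aV ⟨x - (m+1), hx⟩ else 0 with hsdef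
  have sv_d : ∀ i, i ≤ m → s i = i * (B+1) := by
    intro i hi; simp [hsdef, hi]
  have sv_a : ∀ j : Fin (3*m), s (m+1+j.1) = aV j := by
    intro j
    have h1 : ¬ (m+1+j.1 ≤ m) := by omega
    have h2 : m+1+j.1 - (m+1) < 3*m := by have := j.2; omega
    have h3 : (⟨m+1+j.1 - (m+1), h2⟩ : Fin (3*m)) = j := by
      apply Fin.ext; simp
    simp only [hsdef]
    rw [if_neg h1, dif_pos h2, h3]
  have hpreB : ∀ j, pre j + k j ≤ B := by
    intro j
    have hnot : j ∉ Finset.univ.filter (fun j' => f j' = f j ∧ j' < j) := by simp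
    have hins : insert j (Finset.univ.filter (fun j' => f j' = f j ∧ j' < j))
        ⊆ Finset.univ.filter (fun j' => f j' = f j) := by
      intro x hx
      simp only [Finset.mem_insert, Finset.mem_filter, Finset.mem_univ, true_and] at hx ⊢
      rcases hx with rfl | ⟨hx1, _⟩
      · rfl
      · exact hx1
    have hsle := Finset.sum_le_sum_of_subset (f := k) hins
    rw [Finset.sum_insert hnot, hfib (f j)] at hsle
    rw [hpreval]
    omega
  have hord : ∀ j1 j2 : Fin (3*m), f j1 = f j2 → j1 < j2 → aV j1 + k j1 ≤ aV j2 := by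
    intro j1 j2 hfe hlt
    have hnot : j1 ∉ Finset.univ.filter (fun j' => f j' = f j1 ∧ j' < j1) := by simp
    have hins : insert j1 (Finset.univ.filter (fun j' => f j' = f j1 ∧ j' < j1))
        ⊆ Finset.univ.filter (fun j' => f j' = f j2 ∧ j' < j2) := by
      intro x hx
      simp only [Finset.mem_insert, Finset.mem_filter, Finset.mem_univ, true_and] at hx ⊢
      rcases hx with rfl | ⟨hx1, hx2⟩
      · exact ⟨hfe, hlt⟩
      · exact ⟨hx1.trans hfe, hx2.trans hlt⟩
    have hsle := Finset.sum_le_sum_of_subset (f := k) hins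
    rw [Finset.sum_insert hnot] at hsle
    rw [haVval j1, haVval j2, hpreval j1, hpreval j2, hfe]
    rw [hfe] at hsle
    omega
  have hgapu : ∀ j, aV j + k j ≤ (f j).1 * (B+1) + B := by
    intro j
    have := hpreB j
    rw [haVval]
    omega
  have gapdisj : ∀ j j' : Fin (3*m), (f j).1 < (f j').1 →
      Disjoint (Finset.Icc (aV j + 1) (aV j + k j)) (Finset.Icc (aV j' + 1) (aV j' + k j')) := by
    intro j j' hlt
    rw [Finset.disjoint_left]
    intro x hx hx'
    rw [Finset.mem_Icc] at hx hx'
    have h1 := hgapu j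
    have h2 : (f j).1 * (B+1) ≤ aV j := by rw [haVval]; omega
    have h2' : (f j').1 * (B+1) ≤ aV j' := by rw [haVval j']; omega
    have h3 : ((f j).1 + 1) * (B+1) ≤ (f j').1 * (B+1) := Nat.mul_le_mul_right _ hlt
    have h4 : ((f j).1 + 1) * (B+1) = (f j).1 * (B+1) + (B+1) := by ring
    linarith [hx.1, hx.2, hx'.1, hx'.2]
  -- the two term lists
  set P1 : List (Trm × Trm) :=
    List.ofFn fun i : Fin (m+1) => ((Trm.var i.1, Trm.var i.1) : Trm × Trm) with hP1
  set P2 : List (Trm × Trm) :=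
    List.ofFn fun j : Fin (3*m) =>
      ((Trm.add (Trm.var (m+1+j.1)) (Trm.const 1),
        Trm.add (Trm.var (m+1+j.1)) (Trm.const (k j))) : Trm × Trm) with hP2
  have le1 : ∀ p ∈ P1, Trm.eval s p.1 ≤ Trm.eval s p.2 := by
    intro p hp
    rw [hP1] at hp
    obtain ⟨i, rfl⟩ := List.mem_ofFn.mp hp
    exact le_refl _
  have pw1 : (P1.map (evalP s)).Pairwise DisjIcc := by
    rw [hP1, List.map_ofFn, List.pairwise_ofFn]
    intro i i' hlt
    apply disjIcc_of_lt
    show s i.1 < s i'.1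
    rw [sv_d i.1 (by omega), sv_d i'.1 (by omega)]
    exact Nat.mul_lt_mul_of_lt_of_le hlt (le_refl _) (by omega)
  have le2 : ∀ p ∈ P2, Trm.eval s p.1 ≤ Trm.eval s p.2 := by
    intro p hp
    rw [hP2] at hp
    obtain ⟨j, rfl⟩ := List.mem_ofFn.mp hp
    show s (m+1+j.1) + 1 ≤ s (m+1+j.1) + k j
    have := kpos j
    omega
  have pw2 : (P2.map (evalP s)).Pairwise DisjIcc := by
    rw [hP2, List.map_ofFn, List.pairwise_ofFn]
    intro j j' hlt
    show Disjoint (Finset.Icc (s (m+1+j.1) + 1) (s (m+1+j.1) + k j))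
      (Finset.Icc (s (m+1+j'.1) + 1) (s (m+1+j'.1) + k j'))
    rw [sv_a j, sv_a j']
    rcases Nat.lt_trichotomy (f j).1 (f j').1 with hc | hc | hc
    · exact gapdisj _ _ hc
    · have hfe : f j = f j' := Fin.ext hc
      have := hord j j' hfe hlt
      rw [Finset.disjoint_left]
      intro x hx hx'
      rw [Finset.mem_Icc] at hx hx'
      omega
    · exact (gapdisj _ _ hc).symm
  obtain ⟨h1, hk1, hs1⟩ := exists_sat_arrlist le1 pw1
  obtain ⟨h2, hk2, hs2⟩ := exists_sat_arrlist le2 pw2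
  rw [hP1, List.map_ofFn] at hk1
  rw [hP2, List.map_ofFn] at hk2
  have hdk : Disjoint h1.keys h2.keys := by
    rw [hk1, hk2, Finset.disjoint_left]
    intro x hx hx2
    obtain ⟨p, hp, hxp⟩ := mem_iccU.mp hx
    obtain ⟨i, rfl⟩ := List.mem_ofFn.mp hp
    obtain ⟨q, hq, hxq⟩ := mem_iccU.mp hx2
    obtain ⟨j, rfl⟩ := List.mem_ofFn.mp hq
    have hxp' : x ∈ Finset.Icc (s i.1) (s i.1) := hxp
    have hxq' : x ∈ Finset.Icc (s (m+1+j.1) + 1) (s (m+1+j.1) + k j) := hxq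
    rw [Finset.mem_Icc] at hxp' hxq'
    rw [sv_d i.1 (by omega)] at hxp'
    rw [sv_a j] at hxq'
    have hga : (f j).1 * (B+1) ≤ aV j := by rw [haVval]; omega
    have hgb := hgapu j
    rcases le_or_gt i.1 (f j).1 with hc | hc
    · have : i.1 * (B+1) ≤ (f j).1 * (B+1) := Nat.mul_le_mul_right _ hc
      linarith [hxp'.1, hxp'.2, hxq'.1, hxq'.2]
    · have h3 : ((f j).1 + 1) * (B+1) ≤ i.1 * (B+1) := Nat.mul_le_mul_right _ hc
      have h4 : ((f j).1 + 1) * (B+1) = (f j).1 * (B+1) + (B+1) := by ring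
      linarith [hxp'.1, hxp'.2, hxq'.1, hxq'.2]
  have hdisj := finmap_disjoint_of_keys hdk
  refine ⟨s, h1 ∪ h2, ⟨?_, ?_⟩, ?_⟩
  · rw [bigAnd_sat]
    intro p hp
    obtain ⟨i, rfl⟩ := List.mem_ofFn.mp hp
    show s (i.1 + 1) = s i.1 + (B+1)
    rw [sv_d _ (by omega : i.1 + 1 ≤ m), sv_d _ (by omega : i.1 ≤ m)]
    ring
  · rw [bigAnd_sat]
    intro p hp
    obtain ⟨j, rfl⟩ := List.mem_ofFn.mp hp
    constructor
    · show s 0 ≤ s (m+1+j.1)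
      rw [sv_d 0 (Nat.zero_le m)]
      simp
    · show s (m+1+j.1) + k j < s m
      rw [sv_a j, sv_d m le_rfl]
      have hg1 := hgapu j
      have hfm : (f j).1 + 1 ≤ m := (f j).2
      have hg2 : ((f j).1 + 1) * (B+1) ≤ m * (B+1) := Nat.mul_le_mul_right _ hfm
      have hg3 : ((f j).1 + 1) * (B+1) = (f j).1 * (B+1) + (B+1) := by ring
      linarith
  · refine ⟨h1, h2, hdisj, rfl, ?_, ?_⟩
    · have e1 : (List.ofFn fun i : Fin (m+1) => Spatial.arr (Trm.var i.1) (Trm.var i.1))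
          = P1.map (fun p => Spatial.arr p.1 p.2) := by
        rw [hP1, List.map_ofFn]; rfl
      rw [e1]
      exact hs1
    · have e2 : (List.ofFn fun j : Fin (3*m) =>
            Spatial.arr (Trm.add (Trm.var (m+1+j.1)) (Trm.const 1))
              (Trm.add (Trm.var (m+1+j.1)) (Trm.const (k j))))
          = P2.map (fun p => Spatial.arr p.1 p.2) := by
        rw [hP2, List.map_ofFn]; rfl
      rw [e2]
      exact hs2

/-- Reduction of 3-partition to ASL satisfiability: given a 3-partition instance
`(B, S)` (so `Σ kⱼ = m·B` and `B/4 < kⱼ < B/2` for all `j`), the symbolic heap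
`A_{B,S}` is satisfiable iff there is a complete 3-partition of `S` w.r.t. `B`. -/
theorem stmt_5 (m B : ℕ) (k : Fin (3 * m) → ℕ)
    (hsum : ∑ j, k j = m * B)
    (hbound : ∀ j, B < 4 * k j ∧ 2 * k j < B) :
    (heapABS m B k).Satisfiable ↔ HasThreePartition m B k :=
  ⟨forward_aux m B k hsum hbound, backward_aux m B k hbound⟩
end

section
/- Let (A, B) be a biabduction instance where A = Π : ⊛_{i=1}^n array(a_i,b_i) * ⊛_{i=1}^k (t_i ↦ u_i) and B = Π' : ⊛_{i=1}^m array(c_i,d_i) * ⊛_{i=1}^ℓ (v_i ↦ w_i) are quantifier-free symbolic heaps. If the biabduction problem (A,B) has a solution — i.e., there exist quantifier-free symbolic heaps X, Y such that A*X is satisfiable and A*X ⊨ B*Y — then the arithmetic formula β(A,B) is satisfiable over ℕ. -/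
/-! ### Auxiliary lemmas for `stmt_6` -/

lemma arrs_mem_absArrays : ∀ (F : Spatial) (p : Trm × Trm), p ∈ F.arrs → p ∈ F.absArrays
  | .emp, p, hp => by simp [Spatial.arrs] at hp
  | .pto _ _, p, hp => by simp [Spatial.arrs] at hp
  | .arr _ _, p, hp => hp
  | .star F G, p, hp => by
    simp only [Spatial.arrs, List.mem_append] at hp
    simp only [Spatial.absArrays, List.mem_append]
    exact hp.imp (arrs_mem_absArrays F p) (arrs_mem_absArrays G p)

/-- The main structural lemma about models of spatial formulas. -/
theorem spatial_struct : ∀ (F : Spatial) (s : Stack) (h : Heap), F.sat s h →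
    (∀ p ∈ F.absArrays, Trm.eval s p.1 ≤ Trm.eval s p.2) ∧
    (∀ p ∈ F.absArrays, ∀ x, Trm.eval s p.1 ≤ x → x ≤ Trm.eval s p.2 → x ∈ h) ∧
    (∀ p ∈ F.ptos, h.lookup (Trm.eval s p.1) = some (Trm.eval s p.2)) ∧
    List.Pairwise (fun p q => Trm.eval s p.2 < Trm.eval s q.1 ∨ Trm.eval s q.2 < Trm.eval s p.1)
      F.absArrays ∧
    (∀ p ∈ F.ptos, ∀ q ∈ F.arrs,
      Trm.eval s p.1 < Trm.eval s q.1 ∨ Trm.eval s q.2 < Trm.eval s p.1)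
  | .emp, s, h, hs => by
    simp [Spatial.absArrays, Spatial.ptos, Spatial.arrs]
  | .pto t u, s, h, hs => by
    obtain ⟨hk, hl⟩ := hs
    refine ⟨?_, ?_, ?_, ?_, ?_⟩
    · simp [Spatial.absArrays]
    · intro p hp x hx1 hx2
      simp [Spatial.absArrays] at hp
      subst hp
      have : x = Trm.eval s t := le_antisymm hx2 hx1
      subst this
      rw [← Finmap.mem_keys, hk]
      simp
    · intro p hp
      simp [Spatial.ptos] at hp
      subst hp
      exact hl
    · simp [Spatial.absArrays]
    · simp [Spatial.arrs]
  | .arr t u, s, h, hs => by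
    obtain ⟨hle, hk⟩ := hs
    refine ⟨?_, ?_, ?_, ?_, ?_⟩
    · simp [Spatial.absArrays]; exact hle
    · intro p hp x hx1 hx2
      simp [Spatial.absArrays] at hp
      subst hp
      rw [← Finmap.mem_keys, hk]
      exact Finset.mem_Icc.2 ⟨hx1, hx2⟩
    · simp [Spatial.ptos]
    · simp [Spatial.absArrays]
    · simp [Spatial.ptos]
  | .star F G, s, h, hs => by
    obtain ⟨h₁, h₂, hdisj, rfl, hF, hG⟩ := hs
    obtain ⟨b1, m1, l1, pw1, c1⟩ := spatial_struct F s h₁ hF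
    obtain ⟨b2, m2, l2, pw2, c2⟩ := spatial_struct G s h₂ hG
    have cross : ∀ p ∈ F.absArrays, ∀ q ∈ G.absArrays,
        Trm.eval s p.2 < Trm.eval s q.1 ∨ Trm.eval s q.2 < Trm.eval s p.1 := by
      intro p hp q hq
      by_contra hc
      push_neg at hc
      have hx1 : max (Trm.eval s p.1) (Trm.eval s q.1) ∈ h₁ :=
        m1 p hp _ (le_max_left _ _) (max_le (b1 p hp) hc.1)
      have hx2 : max (Trm.eval s p.1) (Trm.eval s q.1) ∈ h₂ :=
        m2 q hq _ (le_max_right _ _) (max_le hc.2 (b2 q hq))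
      exact hdisj _ hx1 hx2
    refine ⟨?_, ?_, ?_, ?_, ?_⟩
    · intro p hp
      simp only [Spatial.absArrays, List.mem_append] at hp
      exact hp.elim (b1 p) (b2 p)
    · intro p hp x hx1 hx2
      simp only [Spatial.absArrays, List.mem_append] at hp
      rcases hp with hp | hp
      · exact Finmap.mem_union.2 (Or.inl (m1 p hp x hx1 hx2))
      · exact Finmap.mem_union.2 (Or.inr (m2 p hp x hx1 hx2))
    · intro p hp
      simp only [Spatial.ptos, List.mem_append] at hp
      rcases hp with hp | hp
      · have := l1 p hp
        rw [Finmap.lookup_union_left (Finmap.mem_iff.2 ⟨_, this⟩)]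
        exact this
      · have := l2 p hp
        have hmem2 : Trm.eval s p.1 ∈ h₂ := Finmap.mem_iff.2 ⟨_, this⟩
        have hnot1 : Trm.eval s p.1 ∉ h₁ := fun hm => hdisj _ hm hmem2
        rw [Finmap.lookup_union_right hnot1]
        exact this
    · simp only [Spatial.absArrays]
      exact List.pairwise_append.2 ⟨pw1, pw2, cross⟩
    · intro p hp q hq
      simp only [Spatial.ptos, List.mem_append] at hp
      simp only [Spatial.arrs, List.mem_append] at hq
      rcases hp with hp | hp <;> rcases hq with hq | hq
      · exact c1 p hp q hq
      · -- p ∈ F.ptos, q ∈ G.arrs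
        by_contra hc
        push_neg at hc
        have hmem1 : Trm.eval s p.1 ∈ h₁ := Finmap.mem_iff.2 ⟨_, l1 p hp⟩
        have hmem2 : Trm.eval s p.1 ∈ h₂ :=
          m2 q (arrs_mem_absArrays G q hq) _ hc.1 hc.2
        exact hdisj _ hmem1 hmem2
      · by_contra hc
        push_neg at hc
        have hmem2 : Trm.eval s p.1 ∈ h₂ := Finmap.mem_iff.2 ⟨_, l2 p hp⟩
        have hmem1 : Trm.eval s p.1 ∈ h₁ :=
          m1 q (arrs_mem_absArrays F q hq) _ hc.1 hc.2
        exact hdisj _ hmem1 hmem2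
      · exact c2 p hp q hq

/-- Overwriting the value of an allocated cell that is not a points-to address
preserves satisfaction of a spatial formula. -/
theorem sat_insert : ∀ (F : Spatial) (s : Stack) (h : Heap) (x y : ℕ), F.sat s h → x ∈ h →
    (∀ p ∈ F.ptos, Trm.eval s p.1 ≠ x) → F.sat s (h.insert x y)
  | .emp, s, h, x, y, hs, hx, hp => by
    rw [hs] at hx
    exact absurd hx Finmap.notMem_empty
  | .pto t u, s, h, x, y, hs, hx, hp => by
    obtain ⟨hk, _⟩ := hs
    rw [← Finmap.mem_keys, hk, Finset.mem_singleton] at hx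
    exact absurd hx.symm (hp (t, u) (by simp [Spatial.ptos]))
  | .arr t u, s, h, x, y, hs, hx, hp => by
    obtain ⟨hle, hk⟩ := hs
    refine ⟨hle, ?_⟩
    rw [← hk]
    ext a
    simp only [Finmap.mem_keys, Finmap.mem_insert]
    constructor
    · rintro (rfl | ha)
      · exact hx
      · exact ha
    · exact Or.inr
  | .star F G, s, h, x, y, hs, hx, hp => by
    obtain ⟨h₁, h₂, hdisj, rfl, hF, hG⟩ := hs
    have hpF : ∀ p ∈ F.ptos, Trm.eval s p.1 ≠ x := fun p h =>
      hp p (by simp only [Spatial.ptos, List.mem_append]; exact Or.inl h)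
    have hpG : ∀ p ∈ G.ptos, Trm.eval s p.1 ≠ x := fun p h =>
      hp p (by simp only [Spatial.ptos, List.mem_append]; exact Or.inr h)
    rcases Finmap.mem_union.1 hx with hx1 | hx2
    · refine ⟨h₁.insert x y, h₂, ?_, ?_, sat_insert F s h₁ x y hF hx1 hpF, hG⟩
      · intro a ha
        rcases Finmap.mem_insert.1 ha with rfl | ha
        · exact hdisj _ hx1
        · exact hdisj _ ha
      · exact Finmap.insert_union
    · have hx1 : x ∉ h₁ := fun hm => hdisj _ hm hx2
      refine ⟨h₁, h₂.insert x y, ?_, ?_, hF, sat_insert G s h₂ x y hG hx2 hpG⟩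
      · intro a ha hb
        rcases Finmap.mem_insert.1 hb with rfl | hb
        · exact hx1 ha
        · exact hdisj _ ha hb
      · apply Finmap.ext_lookup
        intro a
        by_cases hax : a = x
        · subst hax
          rw [Finmap.lookup_insert, Finmap.lookup_union_right hx1, Finmap.lookup_insert]
        · rw [Finmap.lookup_insert_of_ne _ hax]
          by_cases ha1 : a ∈ h₁
          · rw [Finmap.lookup_union_left ha1, Finmap.lookup_union_left ha1]
          · rw [Finmap.lookup_union_right ha1, Finmap.lookup_union_right ha1,
              Finmap.lookup_insert_of_ne _ hax]
/-- Proposition (solution ⟹ β satisfiable): if the biabduction problem `(A,B)`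
(with `A`, `B` satisfiable quantifier-free symbolic heaps) has a solution, then
`β(A,B)` is satisfiable over ℕ. -/
theorem stmt_6 (A B : SymHeap) (hA : A.Satisfiable) (hB : B.Satisfiable)
    (hsol : HasBiabductionSolution A B) :
    ∃ s : Stack, betaSat A B s := by
  obtain ⟨X, Y, ⟨s, h, hsat⟩, hent⟩ := hsol
  refine ⟨s, ?_⟩
  obtain ⟨⟨hAp, hXp⟩, h₁, h₂, hdisj, hhu, hAs, hXs⟩ := hsat
  obtain ⟨⟨hBp, hYp⟩, g₁, g₂, gdisj, hgu, hBs, hYs⟩ :=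
    hent s h ⟨⟨hAp, hXp⟩, h₁, h₂, hdisj, hhu, hAs, hXs⟩
  obtain ⟨bA, mA, lA, pwA, cA⟩ := spatial_struct A.spatial s h₁ hAs
  obtain ⟨bX, mX, lX, pwX, cX⟩ := spatial_struct X.spatial s h₂ hXs
  obtain ⟨bB, mB, lB, pwB, cB⟩ := spatial_struct B.spatial s g₁ hBs
  refine ⟨⟨hAp, bA, pwA⟩, ⟨hBp, bB, pwB⟩, ?_, ?_⟩
  · -- points-to addresses of B avoid the arrays of A
    intro p hp q hq
    by_contra hc
    push_neg at hc
    set v := Trm.eval s p.1 with hv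
    set w := Trm.eval s p.2 with hw
    have hvmem₁ : v ∈ h₁ := mA q (arrs_mem_absArrays A.spatial q hq) v hc.1 hc.2
    have hvAptos : ∀ r ∈ A.spatial.ptos, Trm.eval s r.1 ≠ v := by
      intro r hr
      rcases cA r hr q hq with hlt | hlt
      · exact fun he => absurd hc.1 (by omega)
      · exact fun he => absurd hc.2 (by omega)
    have hvXptos : ∀ r ∈ X.spatial.ptos, Trm.eval s r.1 ≠ v := by
      intro r hr he
      have : Trm.eval s r.1 ∈ h₂ := Finmap.mem_iff.2 ⟨_, lX r hr⟩
      rw [he] at this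
      exact hdisj _ hvmem₁ this
    -- perform the heap surgery
    have hsat' : (A.star X).sat s (h.insert v (w + 1)) := by
      refine ⟨⟨hAp, hXp⟩, h₁.insert v (w + 1), h₂, ?_, ?_,
        sat_insert A.spatial s h₁ v (w + 1) hAs hvmem₁ hvAptos, hXs⟩
      · intro a ha
        rcases Finmap.mem_insert.1 ha with rfl | ha
        · exact hdisj _ hvmem₁
        · exact hdisj _ ha
      · rw [hhu, Finmap.insert_union]
    obtain ⟨_, g₁', g₂', gdisj', hgu', hBs', hYs'⟩ := hent s (h.insert v (w + 1)) hsat'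
    obtain ⟨_, _, lB', _, _⟩ := spatial_struct B.spatial s g₁' hBs'
    have hlk : (h.insert v (w + 1)).lookup v = some w := by
      rw [hgu', Finmap.lookup_union_left (Finmap.mem_iff.2 ⟨_, lB' p hp⟩)]
      exact lB' p hp
    rw [Finmap.lookup_insert] at hlk
    simp at hlk
  · -- agreeing points-to atoms
    intro p hp q hq
    by_cases he : Trm.eval s p.1 = Trm.eval s q.1
    · right
      have hA' : h.lookup (Trm.eval s p.1) = some (Trm.eval s p.2) := by
        rw [hhu, Finmap.lookup_union_left (Finmap.mem_iff.2 ⟨_, lA p hp⟩)]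
        exact lA p hp
      have hB' : h.lookup (Trm.eval s q.1) = some (Trm.eval s q.2) := by
        rw [hgu, Finmap.lookup_union_left (Finmap.mem_iff.2 ⟨_, lB q hq⟩)]
        exact lB q hq
      rw [he, hB'] at hA'
      exact (Option.some_injective _ hA').symm
    · exact Or.inl he
end
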